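/- Let X_1, ..., X_n be i.i.d. points on the unit circle (identified with angles in [0,2π)) with continuous density f, and define G(x) = ∫_x^{x+π} f(y) dy (periodic extension). Then the probability that 0 ∈ ℝ² is not in the convex hull of the points (cos X_i, sin X_i) equals n ∫_0^{2π} f(x) G(x)^{n-1} dx. -/

import Mathlib

open MeasureTheory ProbabilityTheory Real intervalIntegral

section Aux

lemma two_pi_pos' : (0:ℝ) < 2 * π := by positivity

lemma periodic_toIcoMod' {g : ℝ → ℝ} (hg : Function.Periodic g (2*π)) (a b : ℝ) :
    g (toIcoMod two_pi_pos' a b) = g b := by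
  have h2 : b = toIcoDiv two_pi_pos' a b • (2*π) + toIcoMod two_pi_pos' a b :=
    sub_eq_iff_eq_add.mp (self_sub_toIcoMod two_pi_pos' a b)
  calc g (toIcoMod two_pi_pos' a b)
      = g (toIcoMod two_pi_pos' a b + toIcoDiv two_pi_pos' a b • (2*π)) :=
        ((hg.zsmul _) _).symm
    _ = g b := by rw [add_comm]; exact (congrArg g h2).symm

lemma mem_Ioo_of_sin_pos' {d : ℝ} (hd : d ∈ Set.Ico 0 (2*π)) (hs : 0 < Real.sin d) :
    d ∈ Set.Ioo 0 π := by
  obtain ⟨h0, h2⟩ := hd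
  constructor
  · rcases eq_or_lt_of_le h0 with h | h
    · simp [← h] at hs
    · exact h
  · by_contra hpi
    push_neg at hpi
    have : Real.sin d ≤ 0 := by
      have : Real.sin d = -Real.sin (d - π) := by
        rw [Real.sin_sub_pi]; ring
      rw [this]
      have : 0 ≤ Real.sin (d - π) :=
        Real.sin_nonneg_of_nonneg_of_le_pi (by linarith) (by linarith [Real.pi_pos])
      linarith
    linarith

lemma halfplane_to_hull' {n : ℕ} (θ : Fin n → ℝ) (φ : ℝ) (h : ∀ i, 0 < Real.cos (θ i - φ)) :
    (0:ℝ×ℝ) ∉ convexHull ℝ (Set.range fun i => (Real.cos (θ i), Real.sin (θ i))) := by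
  intro h0
  have hlin : IsLinearMap ℝ (fun v : ℝ × ℝ => v.1 * Real.cos φ + v.2 * Real.sin φ) := by
    constructor <;> intros <;> simp [Prod.fst_add, Prod.snd_add, smul_eq_mul] <;> ring
  have hconv : Convex ℝ {v : ℝ × ℝ | 0 < v.1 * Real.cos φ + v.2 * Real.sin φ} :=
    convex_halfSpace_gt hlin 0
  have hsub : convexHull ℝ (Set.range fun i => (Real.cos (θ i), Real.sin (θ i))) ⊆
      {v : ℝ × ℝ | 0 < v.1 * Real.cos φ + v.2 * Real.sin φ} := by
    apply convexHull_min _ hconv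
    rintro _ ⟨i, rfl⟩
    have := h i
    rw [Real.cos_sub] at this
    simpa [mul_comm] using this
  have := hsub h0
  simp at this

lemma hull_to_halfplane' {n : ℕ} [Nonempty (Fin n)] (θ : Fin n → ℝ)
    (h : (0:ℝ×ℝ) ∉ convexHull ℝ (Set.range fun i => (Real.cos (θ i), Real.sin (θ i)))) :
    ∃ φ, ∀ i, 0 < Real.cos (θ i - φ) := by
  set S := Set.range fun i => (Real.cos (θ i), Real.sin (θ i)) with hS
  have hfin : S.Finite := Set.finite_range _
  obtain ⟨L, u, hu0, hu⟩ := geometric_hahn_banach_point_closed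
    (convex_convexHull ℝ S) (hfin.isClosed_convexHull (𝕜 := ℝ)) h
  rw [map_zero] at hu0
  set a := L (1, 0) with ha
  set b := L (0, 1) with hb
  have hab : ∀ i, u < Real.cos (θ i) * a + Real.sin (θ i) * b := by
    intro i
    have h1 := hu _ (subset_convexHull ℝ S ⟨i, rfl⟩)
    have : ((Real.cos (θ i), Real.sin (θ i)) : ℝ × ℝ)
        = Real.cos (θ i) • ((1:ℝ), (0:ℝ)) + Real.sin (θ i) • ((0:ℝ), (1:ℝ)) := by
      ext <;> simp
    simp only at h1
    rw [this, map_add, _root_.map_smul, _root_.map_smul, smul_eq_mul, smul_eq_mul] at h1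
    exact h1
  set z : ℂ := ⟨a, b⟩ with hz
  have hzne : z ≠ 0 := by
    intro hh
    obtain ⟨i⟩ := (inferInstance : Nonempty (Fin n))
    have h1 := hab i
    have h2 : a = 0 := congrArg Complex.re hh
    have h3 : b = 0 := congrArg Complex.im hh
    rw [h2, h3] at h1
    simp at h1
    linarith
  refine ⟨z.arg, fun i => ?_⟩
  have habs : 0 < ‖z‖ := by simpa using hzne
  rw [Real.cos_sub, Complex.cos_arg hzne, Complex.sin_arg]
  have h1 := hab i
  have : Real.cos (θ i) * (z.re / ‖z‖) + Real.sin (θ i) * (z.im / ‖z‖)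
      = (Real.cos (θ i) * a + Real.sin (θ i) * b) / ‖z‖ := by
    simp only [hz]
    ring
  rw [this]
  exact div_pos (lt_trans hu0 h1) habs

lemma halfcircle_to_halfplane' {n : ℕ} (θ : Fin n → ℝ) (i : Fin n)
    (h : ∀ j, j ≠ i → 0 < Real.sin (θ j - θ i)) :
    ∃ φ, ∀ j, 0 < Real.cos (θ j - φ) := by
  have hne : (Finset.univ : Finset (Fin n)).Nonempty := ⟨i, Finset.mem_univ i⟩
  set δ : Fin n → ℝ := fun j => toIcoMod two_pi_pos' 0 (θ j - θ i) with hδ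
  have hδmem : ∀ j, δ j ∈ Set.Ico 0 (2*π) := by
    intro j; simpa using toIcoMod_mem_Ico two_pi_pos' 0 (θ j - θ i)
  have hδi : δ i = 0 := by
    simp [hδ, sub_self]
  have hδlt : ∀ j, δ j < π := by
    intro j
    by_cases hji : j = i
    · rw [hji, hδi]; exact Real.pi_pos
    · have hs : 0 < Real.sin (δ j) := by
        rw [hδ, periodic_toIcoMod' Real.sin_periodic]
        exact h j hji
      exact (mem_Ioo_of_sin_pos' (hδmem j) hs).2
  set M := Finset.univ.sup' hne δ with hM
  have hMlt : M < π := (Finset.sup'_lt_iff hne).mpr fun j _ => hδlt j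
  have hM0 : 0 ≤ M := hδi ▸ Finset.le_sup' δ (Finset.mem_univ i)
  refine ⟨θ i + M/2, fun j => ?_⟩
  have hMj : δ j ≤ M := Finset.le_sup' δ (Finset.mem_univ j)
  have hkey : Real.cos (θ j - (θ i + M/2)) = Real.cos (δ j - M/2) := by
    have : θ j - (θ i + M/2) = (θ j - θ i) - M/2 := by ring
    rw [this]
    have hper : Function.Periodic (fun x => Real.cos (x - M/2)) (2*π) := by
      intro x
      simp only
      rw [show x + 2*π - M/2 = (x - M/2) + 2*π by ring]
      exact Real.cos_periodic _
    exact (periodic_toIcoMod' hper 0 (θ j - θ i)).symm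
  rw [hkey]
  apply Real.cos_pos_of_mem_Ioo
  constructor
  · have := (hδmem j).1; nlinarith [Real.pi_pos]
  · nlinarith [hδlt j]

lemma halfplane_to_halfcircle' {n : ℕ} [Nonempty (Fin n)] (θ : Fin n → ℝ)
    (hgen : ∀ j k, j ≠ k → Real.sin (θ j - θ k) ≠ 0)
    (h : ∃ φ, ∀ j, 0 < Real.cos (θ j - φ)) :
    ∃ i, ∀ j, j ≠ i → 0 < Real.sin (θ j - θ i) := by
  obtain ⟨φ, hφ⟩ := h
  set e : Fin n → ℝ := fun j => toIcoMod two_pi_pos' (-π) (θ j - φ) with he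
  have hemem : ∀ j, e j ∈ Set.Ico (-π) π := by
    intro j
    have := toIcoMod_mem_Ico two_pi_pos' (-π) (θ j - φ)
    rwa [show -π + 2*π = π by ring] at this
  have hcos : ∀ j, 0 < Real.cos (e j) := by
    intro j; rw [he]; simp only; rw [periodic_toIcoMod' Real.cos_periodic]; exact hφ j
  have hbnd : ∀ j, e j ∈ Set.Ioo (-(π/2)) (π/2) := by
    intro j
    obtain ⟨h1, h2⟩ := hemem j
    constructor
    · by_contra hh
      push_neg at hh
      have : Real.cos (e j) ≤ 0 := by
        rw [← Real.cos_neg]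
        exact Real.cos_nonpos_of_pi_div_two_le_of_le (by linarith) (by linarith)
      linarith [hcos j]
    · by_contra hh
      push_neg at hh
      have : Real.cos (e j) ≤ 0 :=
        Real.cos_nonpos_of_pi_div_two_le_of_le hh (by linarith [Real.pi_pos])
      linarith [hcos j]
  obtain ⟨i, -, hi⟩ :=
    Finset.exists_min_image Finset.univ e ⟨Classical.arbitrary _, Finset.mem_univ _⟩
  refine ⟨i, fun j hji => ?_⟩
  have hsin : Real.sin (θ j - θ i) = Real.sin (e j - e i) := by
    have hj' : θ j - φ - e j = toIcoDiv two_pi_pos' (-π) (θ j - φ) • (2*π) :=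
      self_sub_toIcoMod two_pi_pos' (-π) (θ j - φ)
    have hi' : θ i - φ - e i = toIcoDiv two_pi_pos' (-π) (θ i - φ) • (2*π) :=
      self_sub_toIcoMod two_pi_pos' (-π) (θ i - φ)
    set kj := toIcoDiv two_pi_pos' (-π) (θ j - φ) with hkj
    set ki := toIcoDiv two_pi_pos' (-π) (θ i - φ) with hki
    have hstep : θ j - θ i = (e j - e i) + (kj - ki) • (2*π) := by
      rw [sub_zsmul]
      linarith [hj', hi']
    rw [hstep]
    exact (Real.sin_periodic.zsmul _) _
  rw [hsin]
  have h1 : e i ≤ e j := hi j (Finset.mem_univ j)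
  apply lt_of_le_of_ne
  · apply Real.sin_nonneg_of_nonneg_of_le_pi (by linarith)
    have := (hbnd j).2; have := (hbnd i).1; linarith
  · symm
    rw [← hsin]
    exact hgen j i hji

lemma lint_Ioc' {f : ℝ → ℝ} (hf_cont : Continuous f) (hf_nonneg : ∀ x, 0 ≤ f x) {a b : ℝ}
    (hab : a ≤ b) :
    ∫⁻ y in Set.Ioc a b, ENNReal.ofReal (f y) = ENNReal.ofReal (∫ y in a..b, f y) := by
  rw [intervalIntegral.integral_of_le hab,
    ofReal_integral_eq_lintegral_ofReal hf_cont.integrableOn_Ioc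
      (Filter.Eventually.of_forall (fun y => hf_nonneg y))]

lemma lint_Ioo' {f : ℝ → ℝ} (hf_cont : Continuous f) (hf_nonneg : ∀ x, 0 ≤ f x) {a b : ℝ}
    (hab : a ≤ b) :
    ∫⁻ y in Set.Ioo a b, ENNReal.ofReal (f y) = ENNReal.ofReal (∫ y in a..b, f y) := by
  rw [setLIntegral_congr Ioo_ae_eq_Ioc]
  exact lint_Ioc' hf_cont hf_nonneg hab

lemma lint_Ico' {f : ℝ → ℝ} (hf_cont : Continuous f) (hf_nonneg : ∀ x, 0 ≤ f x) {a b : ℝ}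
    (hab : a ≤ b) :
    ∫⁻ y in Set.Ico a b, ENNReal.ofReal (f y) = ENNReal.ofReal (∫ y in a..b, f y) := by
  rw [setLIntegral_congr Ico_ae_eq_Ioc]
  exact lint_Ioc' hf_cont hf_nonneg hab

lemma measure_halfarc' {f : ℝ → ℝ} (hf_cont : Continuous f) (hf_nonneg : ∀ x, 0 ≤ f x)
    (hf_per : Function.Periodic f (2 * π)) {x : ℝ} (hx : x ∈ Set.Ico (0:ℝ) (2*π)) :
    ((volume.restrict (Set.Ico (0:ℝ) (2 * π))).withDensity fun y => ENNReal.ofReal (f y))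
      {y | 0 < Real.sin (y - x)} = ENNReal.ofReal (∫ y in x..(x+π), f y) := by
  obtain ⟨hx0, hx2⟩ := hx
  have hmeasS : MeasurableSet {y : ℝ | 0 < Real.sin (y - x)} := by
    apply measurableSet_lt measurable_const
    exact (Real.continuous_sin.comp (continuous_id.sub continuous_const)).measurable
  rw [withDensity_apply _ hmeasS, Measure.restrict_restrict hmeasS]
  have hset : {y : ℝ | 0 < Real.sin (y - x)} ∩ Set.Ico 0 (2*π)
      = Set.Ioo x (min (x+π) (2*π)) ∪ Set.Ico 0 (x-π) := by
    ext y
    simp only [Set.mem_inter_iff, Set.mem_setOf_eq, Set.mem_Ico, Set.mem_union, Set.mem_Ioo,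
      lt_min_iff]
    constructor
    · rintro ⟨hs, hy0, hy2⟩
      set t := y - x with ht
      have ht1 : -(2*π) < t := by simp only [ht]; linarith
      have ht2 : t < 2*π := by simp only [ht]; linarith
      have hcase : (0 < t ∧ t < π) ∨ t < -π := by
        by_contra hc
        push_neg at hc
        have h2 := hc.2
        rcases le_or_gt t 0 with h | h
        · have : Real.sin t ≤ 0 := by
            rw [show t = -(-t) by ring, Real.sin_neg]
            have : 0 ≤ Real.sin (-t) :=
              Real.sin_nonneg_of_nonneg_of_le_pi (by linarith) (by linarith)
            linarith
          linarith
        · have hge : π ≤ t := by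
            rcases hc.1 h with h'
            linarith
          have : Real.sin t ≤ 0 := by
            rw [show t = (t - π) + π by ring, Real.sin_add_pi]
            have : 0 ≤ Real.sin (t - π) :=
              Real.sin_nonneg_of_nonneg_of_le_pi (by linarith) (by linarith)
            linarith
          linarith
      rcases hcase with ⟨h1, h2⟩ | h1
      · exact Or.inl ⟨by linarith, by linarith, by linarith⟩
      · exact Or.inr ⟨by linarith, by linarith⟩
    · rintro (⟨h1, h2, h3⟩ | ⟨h1, h2⟩)
      · refine ⟨Real.sin_pos_of_pos_of_lt_pi (by linarith) (by linarith), by linarith, by linarith⟩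
      · have hpi := Real.pi_pos
        refine ⟨?_, h1, by linarith⟩
        have : Real.sin (y - x) = Real.sin (y - x + 2*π) := (Real.sin_periodic _).symm
        rw [this]
        exact Real.sin_pos_of_pos_of_lt_pi (by linarith) (by linarith)
  rw [hset]
  have hdisj : Disjoint (Set.Ioo x (min (x+π) (2*π))) (Set.Ico 0 (x-π)) := by
    apply Set.disjoint_left.mpr
    rintro y ⟨hy1, -⟩ ⟨-, hy2⟩
    have hpi := Real.pi_pos
    linarith
  rw [lintegral_union measurableSet_Ico hdisj]
  have hpi := Real.pi_pos
  rcases le_or_gt (x + π) (2*π) with hc | hc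
  · rw [min_eq_left hc]
    have hempty : Set.Ico (0:ℝ) (x-π) = ∅ := Set.Ico_eq_empty (by intro h; linarith)
    rw [hempty, Measure.restrict_empty, MeasureTheory.lintegral_zero_measure, add_zero,
      lint_Ioo' hf_cont hf_nonneg (by linarith)]
  · rw [min_eq_right (le_of_lt hc), lint_Ioo' hf_cont hf_nonneg (by linarith),
      lint_Ico' hf_cont hf_nonneg (by linarith),
      ← ENNReal.ofReal_add (intervalIntegral.integral_nonneg (by linarith) (fun y _ => hf_nonneg y))
        (intervalIntegral.integral_nonneg (by linarith) (fun y _ => hf_nonneg y))]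
    congr 1
    have hshift : (∫ y in (0:ℝ)..(x-π), f y) = ∫ y in (2*π)..(x+π), f y := by
      have h1 : (∫ y in (0:ℝ)..(x-π), f (y + 2*π)) = ∫ y in (0+2*π)..(x-π+2*π), f y :=
        intervalIntegral.integral_comp_add_right f (2*π)
      rw [show (0:ℝ)+2*π = 2*π by ring, show x-π+2*π = x+π by ring] at h1
      rw [← h1]
      congr 1
      ext y
      exact (hf_per y).symm
    rw [hshift]
    exact intervalIntegral.integral_add_adjacent_intervals
      (hf_cont.intervalIntegrable _ _) (hf_cont.intervalIntegrable _ _)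

lemma map_eq_pi' {Ω : Type*} [MeasurableSpace Ω] (μ : Measure Ω) [IsProbabilityMeasure μ]
    {n : ℕ} (X : Fin n → Ω → ℝ) (hmeas : ∀ i, Measurable (X i))
    (hindep : iIndepFun X μ)
    (ν : Measure ℝ) [IsProbabilityMeasure ν] (hlaw : ∀ i, Measure.map (X i) μ = ν) :
    Measure.map (fun ω i => X i ω) μ = Measure.pi (fun _ => ν) := by
  have hT : Measurable (fun ω i => X i ω) := measurable_pi_lambda _ hmeas
  refine (Measure.pi_eq fun s hs => ?_).symm
  rw [Measure.map_apply hT (MeasurableSet.univ_pi hs)]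
  have hpre : (fun ω i => X i ω) ⁻¹' (Set.pi Set.univ s) = ⋂ i ∈ Finset.univ, X i ⁻¹' s i := by
    ext ω; simp [Set.mem_pi]
  rw [hpre, hindep.measure_inter_preimage_eq_mul Finset.univ (fun i _ => hs i)]
  apply Finset.prod_congr rfl
  intro i _
  rw [← hlaw i, Measure.map_apply (hmeas i) (hs i)]

lemma pi_slice' {m : ℕ} (ν : Measure ℝ) [IsProbabilityMeasure ν] (i : Fin (m+1)) :
    Measure.pi (fun _ : Fin (m+1) => ν) {θ | ∀ j, j ≠ i → 0 < Real.sin (θ j - θ i)}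
      = ∫⁻ x, (ν {y | 0 < Real.sin (y - x)}) ^ m ∂ν := by
  have hmp := measurePreserving_piFinSuccAbove (fun _ : Fin (m+1) => ν) i
  set e := MeasurableEquiv.piFinSuccAbove (fun _ : Fin (m+1) => ℝ) i with he
  have hBmeas : MeasurableSet {p : ℝ × (Fin m → ℝ) | ∀ j, 0 < Real.sin (p.2 j - p.1)} := by
    rw [show {p : ℝ × (Fin m → ℝ) | ∀ j, 0 < Real.sin (p.2 j - p.1)}
        = ⋂ j, {p : ℝ × (Fin m → ℝ) | 0 < Real.sin (p.2 j - p.1)} by ext p; simp]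
    apply MeasurableSet.iInter
    intro j
    apply measurableSet_lt measurable_const
    exact (Real.continuous_sin.measurable.comp
      (((measurable_pi_apply j).comp measurable_snd).sub measurable_fst))
  have hpre : {θ : Fin (m+1) → ℝ | ∀ j, j ≠ i → 0 < Real.sin (θ j - θ i)}
      = e ⁻¹' {p : ℝ × (Fin m → ℝ) | ∀ j, 0 < Real.sin (p.2 j - p.1)} := by
    ext θ
    simp only [Set.mem_preimage, Set.mem_setOf_eq, he,
      MeasurableEquiv.piFinSuccAbove_apply, Fin.insertNthEquiv_symm_apply]
    constructor
    · intro h j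
      exact h _ (Fin.succAbove_ne i j)
    · intro h j hj
      obtain ⟨k, rfl⟩ := Fin.exists_succAbove_eq hj
      exact h k
  rw [hpre, hmp.measure_preimage hBmeas.nullMeasurableSet]
  rw [Measure.prod_apply hBmeas]
  congr 1
  ext x
  have : (Prod.mk x ⁻¹' {p : ℝ × (Fin m → ℝ) | ∀ j, 0 < Real.sin (p.2 j - p.1)})
      = Set.pi Set.univ (fun _ : Fin m => {y | 0 < Real.sin (y - x)}) := by
    ext y; simp [Set.mem_pi]
  rw [this, Measure.pi_pi]
  simp [Finset.prod_const]

lemma measurable_slice' (ν : Measure ℝ) [SFinite ν] :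
    Measurable fun x => ν {y : ℝ | 0 < Real.sin (y - x)} := by
  have h1 : MeasurableSet {p : ℝ × ℝ | 0 < Real.sin (p.2 - p.1)} := by
    apply measurableSet_lt measurable_const
    exact (Real.continuous_sin.comp (continuous_snd.sub continuous_fst)).measurable
  exact measurable_measure_prodMk_left (ν := ν) h1

end Aux

/-- Let `X 1, ..., X n` be i.i.d. angles on the circle with continuous `2π`-periodic
density `f`, and `G x = ∫_x^{x+π} f`.  Then the probability that the origin of `ℝ²`
is *not* in the convex hull of the points `(cos (X i), sin (X i))` equals
`n ∫_0^{2π} f(x) G(x)^(n-1) dx`. -/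
theorem stmt9 {Ω : Type*} [MeasurableSpace Ω] (μ : Measure Ω) [IsProbabilityMeasure μ]
    (n : ℕ) (hn : 2 ≤ n)
    (f : ℝ → ℝ) (hf_cont : Continuous f) (hf_nonneg : ∀ x, 0 ≤ f x)
    (hf_per : Function.Periodic f (2 * π))
    (hf_int : ∫ x in (0:ℝ)..(2 * π), f x = 1)
    (G : ℝ → ℝ) (hG : ∀ x, G x = ∫ y in x..(x + π), f y)
    (X : Fin n → Ω → ℝ) (hmeas : ∀ i, Measurable (X i))
    (hindep : iIndepFun X μ)
    (hlaw : ∀ i, Measure.map (X i) μ =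
      (volume.restrict (Set.Ico (0:ℝ) (2 * π))).withDensity fun x => ENNReal.ofReal (f x)) :
    μ {ω | (0:ℝ × ℝ) ∉
        convexHull ℝ (Set.range fun i => (Real.cos (X i ω), Real.sin (X i ω)))} =
      ENNReal.ofReal (n * ∫ x in (0:ℝ)..(2 * π), f x * G x ^ (n-1)) := by
  have hpi := Real.pi_pos
  obtain _ | m := n
  · exact absurd hn (by norm_num)
  simp only [Nat.add_sub_cancel]
  set ν : Measure ℝ :=
    (volume.restrict (Set.Ico (0:ℝ) (2 * π))).withDensity fun x => ENNReal.ofReal (f x) with hν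
  haveI hνprob : IsProbabilityMeasure ν := by
    constructor
    rw [hν, withDensity_apply _ MeasurableSet.univ, Measure.restrict_univ,
      lint_Ico' hf_cont hf_nonneg (by linarith), hf_int, ENNReal.ofReal_one]
  -- G facts
  have hGnonneg : ∀ x, 0 ≤ G x := fun x => by
    rw [hG]; exact intervalIntegral.integral_nonneg (by linarith) (fun y _ => hf_nonneg y)
  have hGcont : Continuous G := by
    have hFc : Continuous fun b => ∫ t in (0:ℝ)..b, f t :=
      intervalIntegral.continuous_primitive (fun a b => hf_cont.intervalIntegrable a b) 0
    have hGeq : G = fun x => (∫ t in (0:ℝ)..(x+π), f t) - ∫ t in (0:ℝ)..x, f t := by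
      funext x
      rw [hG x, ← intervalIntegral.integral_interval_sub_left
        (hf_cont.intervalIntegrable 0 (x+π)) (hf_cont.intervalIntegrable 0 x)]
    rw [hGeq]
    exact (hFc.comp (continuous_id.add continuous_const)).sub hFc
  -- joint law
  set T : Ω → (Fin (m+1) → ℝ) := fun ω i => X i ω with hTdef
  have hTmeas : Measurable T := measurable_pi_lambda _ hmeas
  have hmap : Measure.map T μ = Measure.pi (fun _ => ν) :=
    map_eq_pi' μ X hmeas hindep ν (fun i => hlaw i)
  -- events
  set A : Fin (m+1) → Set Ω :=
    fun i => {ω | ∀ j, j ≠ i → 0 < Real.sin (X j ω - X i ω)} with hA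
  have hA'meas : ∀ i : Fin (m+1),
      MeasurableSet {θ : Fin (m+1) → ℝ | ∀ j, j ≠ i → 0 < Real.sin (θ j - θ i)} := by
    intro i
    rw [show {θ : Fin (m+1) → ℝ | ∀ j, j ≠ i → 0 < Real.sin (θ j - θ i)}
        = ⋂ j, {θ : Fin (m+1) → ℝ | j ≠ i → 0 < Real.sin (θ j - θ i)} by ext θ; simp]
    apply MeasurableSet.iInter
    intro j
    by_cases hj : j = i
    · simp [hj]
    · simp only [hj, ne_eq, not_false_iff, true_implies]
      apply measurableSet_lt measurable_const
      exact Real.continuous_sin.measurable.comp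
        ((measurable_pi_apply j).sub (measurable_pi_apply i))
  have hAmeas : ∀ i, MeasurableSet (A i) := by
    intro i
    have : A i = T ⁻¹' {θ : Fin (m+1) → ℝ | ∀ j, j ≠ i → 0 < Real.sin (θ j - θ i)} := rfl
    rw [this]
    exact hTmeas (hA'meas i)
  -- the null set
  set Nset : Set Ω := {ω | ∃ j k, j ≠ k ∧ Real.sin (X j ω - X k ω) = 0} with hNdef
  have hpair : ∀ (j k : Fin (m+1)), j ≠ k →
      μ {ω | Real.sin (X j ω - X k ω) = 0} = 0 := by
    intro j k hjk
    have hind2 := hindep.indepFun hjk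
    have hmp := (indepFun_iff_map_prod_eq_prod_map_map
      (hmeas j).aemeasurable (hmeas k).aemeasurable).mp hind2
    have hCmeas : MeasurableSet {p : ℝ × ℝ | Real.sin (p.1 - p.2) = 0} := by
      have : {p : ℝ × ℝ | Real.sin (p.1 - p.2) = 0}
          = (fun p : ℝ × ℝ => Real.sin (p.1 - p.2)) ⁻¹' {0} := by ext p; simp
      rw [this]
      exact (Real.continuous_sin.comp (continuous_fst.sub continuous_snd)).measurable
        (measurableSet_singleton 0)
    have hsetEq : {ω | Real.sin (X j ω - X k ω) = 0}
        = (fun ω => (X j ω, X k ω)) ⁻¹' {p : ℝ × ℝ | Real.sin (p.1 - p.2) = 0} := rfl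
    rw [hsetEq, ← Measure.map_apply ((hmeas j).prodMk (hmeas k)) hCmeas, hmp,
      hlaw j, hlaw k, Measure.prod_apply hCmeas]
    have hzero : ∀ x : ℝ,
        ν (Prod.mk x ⁻¹' {p : ℝ × ℝ | Real.sin (p.1 - p.2) = 0}) = 0 := by
      intro x
      have hcnt : (Prod.mk x ⁻¹' {p : ℝ × ℝ | Real.sin (p.1 - p.2) = 0})
          = Set.range (fun k : ℤ => x - k * π) := by
        ext y
        simp only [Set.mem_preimage, Set.mem_setOf_eq, Set.mem_range, Real.sin_eq_zero_iff]
        constructor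
        · rintro ⟨k, hk⟩; exact ⟨k, by linarith⟩
        · rintro ⟨k, hk⟩; exact ⟨k, by linarith⟩
      have hac : ν ≪ volume :=
        (withDensity_absolutelyContinuous _ _).trans
          (Measure.absolutelyContinuous_of_le Measure.restrict_le_self)
      rw [hcnt]
      exact hac ((Set.countable_range _).measure_zero _)
    rw [lintegral_congr (g := fun _ => (0:ENNReal)) fun x => hzero x, lintegral_zero]
  have hNnull : μ Nset = 0 := by
    have : Nset = ⋃ j, ⋃ k, {ω | j ≠ k ∧ Real.sin (X j ω - X k ω) = 0} := by
      ext ω; simp [hNdef]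
    rw [this]
    apply measure_iUnion_null
    intro j
    apply measure_iUnion_null
    intro k
    by_cases hjk : j = k
    · subst hjk
      rw [show {ω | j ≠ j ∧ Real.sin (X j ω - X j ω) = 0} = (∅ : Set Ω) by ext ω; simp]
      exact measure_empty
    · exact measure_mono_null (fun ω h => h.2) (hpair j k hjk)
  -- event equivalence
  set E : Set Ω := {ω | (0:ℝ × ℝ) ∉
      convexHull ℝ (Set.range fun i => (Real.cos (X i ω), Real.sin (X i ω)))} with hEdef
  have hsub1 : (⋃ i, A i) ⊆ E := by
    rintro ω hω
    obtain ⟨i, hi⟩ := Set.mem_iUnion.mp hω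
    obtain ⟨φ, hφ⟩ := halfcircle_to_halfplane' (fun j => X j ω) i hi
    exact halfplane_to_hull' (fun j => X j ω) φ hφ
  have hsub2 : E ⊆ (⋃ i, A i) ∪ Nset := by
    intro ω hω
    by_cases hωN : ω ∈ Nset
    · exact Or.inr hωN
    · left
      have hgen : ∀ j k, j ≠ k → Real.sin (X j ω - X k ω) ≠ 0 := by
        intro j k hjk hzero
        exact hωN ⟨j, k, hjk, hzero⟩
      obtain ⟨i, hi⟩ := halfplane_to_halfcircle' (fun j => X j ω) hgen
        (hull_to_halfplane' (fun j => X j ω) hω)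
      exact Set.mem_iUnion.mpr ⟨i, hi⟩
  have hEμ : μ E = μ (⋃ i, A i) := by
    apply le_antisymm
    · calc μ E ≤ μ ((⋃ i, A i) ∪ Nset) := measure_mono hsub2
        _ ≤ μ (⋃ i, A i) + μ Nset := measure_union_le _ _
        _ = μ (⋃ i, A i) := by rw [hNnull, add_zero]
    · exact measure_mono hsub1
  -- disjointness
  have hdisj : Pairwise (Function.onFun Disjoint A) := by
    intro i k hik
    apply Set.disjoint_left.mpr
    intro ω hωi hωk
    have h1 : 0 < Real.sin (X k ω - X i ω) := hωi k (Ne.symm hik)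
    have h2 : 0 < Real.sin (X i ω - X k ω) := hωk i hik
    rw [show X i ω - X k ω = -(X k ω - X i ω) by ring, Real.sin_neg] at h2
    linarith
  -- value of each A i
  have hAvalue : ∀ i, μ (A i)
      = ENNReal.ofReal (∫ x in (0:ℝ)..(2*π), f x * G x ^ m) := by
    intro i
    have hApre : A i = T ⁻¹' {θ : Fin (m+1) → ℝ | ∀ j, j ≠ i → 0 < Real.sin (θ j - θ i)} := rfl
    rw [hApre, ← Measure.map_apply hTmeas (hA'meas i), hmap, pi_slice' ν i]
    -- compute the lintegral
    have hg := measurable_slice' ν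
    rw [hν] at hg
    conv_lhs => rw [hν]
    rw [lintegral_withDensity_eq_lintegral_mul _
      (hf_cont.measurable.ennreal_ofReal) (hg.pow_const m), ← hν]
    have hcongr : ∫⁻ x in Set.Ico (0:ℝ) (2*π),
        ((fun x => ENNReal.ofReal (f x)) * fun x => ν {y : ℝ | 0 < Real.sin (y - x)} ^ m) x
        = ∫⁻ x in Set.Ico (0:ℝ) (2*π), ENNReal.ofReal (f x * G x ^ m) := by
      apply setLIntegral_congr_fun measurableSet_Ico
      intro x hx
      simp only [Pi.mul_apply]
      rw [hν, measure_halfarc' hf_cont hf_nonneg hf_per hx, ← hG x,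
        ENNReal.ofReal_mul (hf_nonneg x), ENNReal.ofReal_pow (hGnonneg x)]
    calc ∫⁻ x in Set.Ico (0:ℝ) (2*π),
          ((fun x => ENNReal.ofReal (f x)) * fun x => ν {y : ℝ | 0 < Real.sin (y - x)} ^ m) x
        = ∫⁻ x in Set.Ico (0:ℝ) (2*π), ENNReal.ofReal (f x * G x ^ m) := hcongr
      _ = ENNReal.ofReal (∫ x in (0:ℝ)..(2*π), f x * G x ^ m) :=
          lint_Ico' (hf_cont.mul (hGcont.pow m))
            (fun x => mul_nonneg (hf_nonneg x) (pow_nonneg (hGnonneg x) m)) (by linarith)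
  -- put everything together
  rw [hEμ, measure_iUnion hdisj hAmeas, tsum_fintype]
  simp only [hAvalue, Finset.sum_const, Finset.card_univ, Fintype.card_fin, nsmul_eq_mul]
  rw [← ENNReal.ofReal_natCast (m+1), ← ENNReal.ofReal_mul (by positivity)]
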